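/- (Misère Mex Rule) Let G be an impartial game whose options are precisely the Nim-heaps *a₁, ..., *a_k, and suppose at least one a_i is 0 or 1. Let m = mex{a₁, ..., a_k}. Then G equals *m under misère equality: for every impartial game X, G + X and *m + X have the same misère outcome. -/

import Mathlib

/-! The combinatorial game theory of `SetTheory.PGame` has been removed from Mathlib; the
definitions it provided and that the statement uses are reproduced here with their old meaning. -/

universe u

namespace SetTheory

/-- Pre-games (as in Mathlib's former `SetTheory.PGame`). -/
inductive PGame : Type (u + 1)
  | mk : ∀ α β : Type u, (α → PGame) → (β → PGame) → PGame

namespace PGame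

/-- Simultaneously `x ≤ y` (first component) and `x ⧏ y` (second component). -/
noncomputable def leLF (x : PGame.{u}) : PGame.{u} → Prop × Prop := by
  induction x with | mk xl xr xL xR IHxl IHxr => ?_
  intro y
  induction y with | mk yl yr yL yR IHyl IHyr => ?_
  exact ((∀ i, (IHxl i (mk yl yr yL yR)).2) ∧ ∀ j, (IHyr j).2,
    (∃ i, (IHyl i).1) ∨ ∃ j, (IHxr j (mk yl yr yL yR)).1)

instance : LE PGame.{u} := ⟨fun x y => (leLF x y).1⟩

/-- Negation of pre-games. -/
def neg : PGame.{u} → PGame.{u}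
  | mk l r L R => mk r l (fun i => neg (R i)) (fun i => neg (L i))

instance : Neg PGame.{u} := ⟨neg⟩

noncomputable instance : Add PGame.{u} :=
  ⟨fun x y => by
    induction x generalizing y with | mk xl xr _ _ IHxl IHxr => _
    induction y with | mk yl yr yL yR IHyl IHyr => _
    have y := mk yl yr yL yR
    refine ⟨xl ⊕ yl, xr ⊕ yr, Sum.rec ?_ ?_, Sum.rec ?_ ?_⟩
    · exact fun i => IHxl i y
    · exact IHyl
    · exact fun i => IHxr i y
    · exact IHyr⟩

/-- Auxiliary for `Impartial`: `G ≈ -G` and all options are (hereditarily) impartial. -/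
def ImpartialAux : PGame.{u} → Prop
  | mk l r L R => (mk l r L R ≤ -mk l r L R ∧ -mk l r L R ≤ mk l r L R) ∧
      (∀ i, ImpartialAux (L i)) ∧ ∀ j, ImpartialAux (R j)

/-- Impartial pre-games. -/
class Impartial (G : PGame.{u}) : Prop where
  out : ImpartialAux G

/-- The nim pre-game of an ordinal. -/
noncomputable def nim (o : Ordinal.{u}) : PGame.{u} :=
  ⟨o.ToType, o.ToType,
    fun x => nim (Ordinal.ToType.mk.symm x).1,
    fun x => nim (Ordinal.ToType.mk.symm x).1⟩
termination_by o
decreasing_by all_goals exact (Ordinal.ToType.mk.symm x).2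

end PGame

end SetTheory

open SetTheory PGame

/-- `G` is a misère P-position: `G` has at least one option and every option of `G` is a
misère N-position (i.e. not a misère P-position).  In particular the empty game `0` is a
misère N-position.  (For an impartial game the options are the left moves.) -/
def MisereP : PGame → Prop
  | PGame.mk l _ L _ => Nonempty l ∧ ∀ i, ¬ MisereP (L i)

namespace SetTheory

namespace PGame

def LeftMoves : PGame.{u} → Type u
  | mk l _ _ _ => l

def RightMoves : PGame.{u} → Type u
  | mk _ r _ _ => r

def moveLeft : (x : PGame.{u}) → x.LeftMoves → PGame.{u}
  | mk _ _ L _ => L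

def moveRight : (x : PGame.{u}) → x.RightMoves → PGame.{u}
  | mk _ _ _ R => R

noncomputable def moveRecOn {C : PGame.{u} → Sort*} (x : PGame.{u})
    (IH : ∀ y : PGame.{u}, (∀ i, C (y.moveLeft i)) → (∀ j, C (y.moveRight j)) → C y) : C x :=
  x.recOn fun yl yr yL yR => IH (mk yl yr yL yR)

theorem leftMoves_add (x y : PGame.{u}) :
    (x + y).LeftMoves = (x.LeftMoves ⊕ y.LeftMoves) := by
  cases x; cases y; rfl

def toLeftMovesAdd {x y : PGame.{u}} : x.LeftMoves ⊕ y.LeftMoves ≃ (x + y).LeftMoves :=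
  Equiv.cast (leftMoves_add x y).symm

theorem add_moveLeft_inl {x y : PGame.{u}} (i : x.LeftMoves) :
    (x + y).moveLeft (toLeftMovesAdd (Sum.inl i)) = x.moveLeft i + y := by
  cases x; cases y; rfl

theorem add_moveLeft_inr {x y : PGame.{u}} (i : y.LeftMoves) :
    (x + y).moveLeft (toLeftMovesAdd (Sum.inr i)) = x + y.moveLeft i := by
  cases x; cases y; rfl

theorem leftMoves_add_cases {x y : PGame.{u}} (k : (x + y).LeftMoves)
    {P : (x + y).LeftMoves → Prop}
    (hl : ∀ i, P (toLeftMovesAdd (Sum.inl i))) (hr : ∀ i, P (toLeftMovesAdd (Sum.inr i))) :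
    P k := by
  rw [← toLeftMovesAdd.apply_symm_apply k]
  rcases toLeftMovesAdd.symm k with i | i
  · exact hl i
  · exact hr i

theorem nim_def (o : Ordinal.{u}) : nim o = ⟨o.ToType, o.ToType,
    fun x => nim (Ordinal.ToType.mk.symm x).1,
    fun x => nim (Ordinal.ToType.mk.symm x).1⟩ := by
  rw [nim]

theorem leftMoves_nim (o : Ordinal.{u}) : (nim o).LeftMoves = o.ToType := by
  rw [nim_def]; rfl

theorem moveLeft_nim_hEq (o : Ordinal.{u}) :
    HEq (nim o).moveLeft (fun x : o.ToType => nim (Ordinal.ToType.mk.symm x).1) := by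
  rw [nim_def]; rfl

noncomputable def toLeftMovesNim {o : Ordinal.{u}} : Set.Iio o ≃ (nim o).LeftMoves :=
  Ordinal.ToType.mk.toEquiv.trans (Equiv.cast (leftMoves_nim o).symm)

theorem toLeftMovesNim_symm_lt {o : Ordinal.{u}} (i : (nim o).LeftMoves) :
    ((toLeftMovesNim.symm i : Set.Iio o) : Ordinal) < o :=
  (toLeftMovesNim.symm i).2

theorem moveLeft_nim' {o : Ordinal.{u}} (i : (nim o).LeftMoves) :
    (nim o).moveLeft i = nim (toLeftMovesNim.symm i).val := by
  exact congr_heq (moveLeft_nim_hEq o) (cast_heq (leftMoves_nim o) i).symm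

theorem moveLeft_nim {o : Ordinal.{u}} (i : Set.Iio o) :
    (nim o).moveLeft (toLeftMovesNim i) = nim i := by
  rw [moveLeft_nim', Equiv.symm_apply_apply]

instance isEmpty_nim_zero_leftMoves : IsEmpty (nim.{u} 0).LeftMoves :=
  ⟨fun i => by have := toLeftMovesNim_symm_lt i; simp at this⟩

end PGame

end SetTheory

lemma misereP_iff (x : PGame) :
    MisereP x ↔ Nonempty x.LeftMoves ∧ ∀ i, ¬ MisereP (x.moveLeft i) := by
  cases x
  exact Iff.rfl

lemma not_misereP_of_isEmpty (x : PGame) (h : IsEmpty x.LeftMoves) : ¬ MisereP x := by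
  intro hx
  exact h.false ((misereP_iff x).mp hx).1.some

lemma misere_mex_aux (k : ℕ) (a : Fin k → ℕ) (h : ∃ i, a i = 0 ∨ a i = 1) :
    ∀ X : PGame.{0},
      (MisereP
          (PGame.mk (Fin k) (Fin k)
            (fun i => nim (a i : Ordinal)) (fun i => nim (a i : Ordinal)) + X) ↔
        MisereP (nim ((sInf {n : ℕ | n ∉ Set.range a} : ℕ) : Ordinal) + X)) := by
  set G : PGame := PGame.mk (Fin k) (Fin k)
      (fun i => nim (a i : Ordinal)) (fun i => nim (a i : Ordinal)) with hG
  set m : ℕ := sInf {n : ℕ | n ∉ Set.range a} with hm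
  have hSne : {n : ℕ | n ∉ Set.range a}.Nonempty :=
    ((Set.finite_range a).infinite_compl).nonempty
  have hm_not : m ∉ Set.range a := Nat.sInf_mem hSne
  have hlt : ∀ j : ℕ, j < m → j ∈ Set.range a := by
    intro j hj
    by_contra hc
    exact Nat.notMem_of_lt_sInf hj hc
  intro X
  induction X using PGame.moveRecOn with
  | _ X ihl ihr =>
  constructor
  · -- G + X P-position → nim m + X P-position
    intro hGX
    have hGX' := (misereP_iff _).mp hGX
    rw [misereP_iff]
    constructor
    · -- nonemptiness of moves of nim m + X
      rcases Nat.eq_zero_or_pos m with hm0 | hmpos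
      · -- m = 0 : then no a i = 0, hence some a i = 1.
        have h0 : (0 : ℕ) ∉ Set.range a := by rw [← hm0]; exact hm_not
        obtain ⟨i1, hi1⟩ : ∃ i, a i = 1 := by
          obtain ⟨i, hi | hi⟩ := h
          · exact absurd ⟨i, hi⟩ h0
          · exact ⟨i, hi⟩
        rcases isEmpty_or_nonempty X.LeftMoves with hXE | hXne
        · -- contradiction: nim 1 + X is then a P-position option of G + X
          exfalso
          apply hGX'.2 (toLeftMovesAdd (Sum.inl i1))
          erw [add_moveLeft_inl (x := G) (y := X) i1]
          change MisereP (nim ((a i1 : ℕ) : Ordinal) + X)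
          rw [hi1]
          rw [misereP_iff]
          constructor
          · exact ⟨toLeftMovesAdd (Sum.inl (toLeftMovesNim
              ⟨0, by simp⟩))⟩
          · intro i
            refine leftMoves_add_cases
              (P := fun i => ¬ MisereP ((nim ((1 : ℕ) : Ordinal) + X).moveLeft i)) i ?_ ?_
            · intro j
              rw [add_moveLeft_inl]
              have hj0 : (nim ((1 : ℕ) : Ordinal)).moveLeft j = nim 0 := by
                rw [moveLeft_nim']
                congr 1
                have h1 : ((toLeftMovesNim.symm j : Set.Iio ((1 : ℕ) : Ordinal)) :
                    Ordinal) < ((1 : ℕ) : Ordinal) := toLeftMovesNim_symm_lt j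
                have h1' : ((toLeftMovesNim.symm j : Set.Iio ((1 : ℕ) : Ordinal)) :
                    Ordinal) < 1 := by simpa using h1
                exact Ordinal.lt_one_iff_zero.mp h1'
              rw [hj0]
              exact not_misereP_of_isEmpty _ ((toLeftMovesAdd.symm).isEmpty)
            · intro j
              exact (hXE.false j).elim
        · obtain ⟨j⟩ := hXne
          exact ⟨toLeftMovesAdd (Sum.inr j)⟩
      · refine ⟨toLeftMovesAdd (Sum.inl (toLeftMovesNim ⟨0, ?_⟩))⟩
        simpa using hmpos
    · intro i
      refine leftMoves_add_cases
        (P := fun i => ¬ MisereP ((nim ((m : ℕ) : Ordinal) + X).moveLeft i)) i ?_ ?_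
      · -- moves in nim m : to nim j with j < m, but then j = a i₀
        intro j
        rw [add_moveLeft_inl, moveLeft_nim']
        obtain ⟨jn, hjn⟩ := Ordinal.lt_omega0.mp
          ((toLeftMovesNim_symm_lt j).trans (Ordinal.nat_lt_omega0 m))
        have hjlt : jn < m := by
          have := toLeftMovesNim_symm_lt j
          rw [hjn] at this
          exact_mod_cast this
        obtain ⟨i0, hi0⟩ := hlt jn hjlt
        have hh := hGX'.2 (toLeftMovesAdd (Sum.inl i0))
        erw [add_moveLeft_inl (x := G) (y := X) i0] at hh
        have hh' : ¬ MisereP (nim ((a i0 : ℕ) : Ordinal) + X) := hh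
        rw [hi0] at hh'
        rw [hjn]
        exact hh'
      · -- moves in X
        intro j
        rw [add_moveLeft_inr, ← ihl j]
        have hh := hGX'.2 (toLeftMovesAdd (Sum.inr j))
        rwa [add_moveLeft_inr] at hh
  · -- nim m + X P-position → G + X P-position
    intro hmX
    have hmX' := (misereP_iff _).mp hmX
    rw [misereP_iff]
    obtain ⟨i0, -⟩ := h
    refine ⟨⟨toLeftMovesAdd (Sum.inl i0)⟩, ?_⟩
    intro i
    refine leftMoves_add_cases
      (P := fun i => ¬ MisereP ((G + X).moveLeft i)) i ?_ ?_
    · intro i1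
      rw [add_moveLeft_inl]
      show ¬ MisereP (nim ((a i1 : ℕ) : Ordinal) + X)
      have hne : a i1 ≠ m := fun he => hm_not ⟨i1, he⟩
      rcases lt_or_gt_of_ne hne with hlt1 | hgt1
      · -- a i1 < m : nim (a i1) + X is an option of nim m + X
        have hh := hmX'.2 (toLeftMovesAdd (Sum.inl (toLeftMovesNim
          ⟨((a i1 : ℕ) : Ordinal), Set.mem_Iio.mpr (by exact_mod_cast hlt1)⟩)))
        rwa [add_moveLeft_inl, moveLeft_nim] at hh
      · -- a i1 > m : nim (a i1) + X has the P-position option nim m + X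
        intro hp
        apply ((misereP_iff _).mp hp).2 (toLeftMovesAdd (Sum.inl (toLeftMovesNim
          ⟨((m : ℕ) : Ordinal), Set.mem_Iio.mpr (by exact_mod_cast hgt1)⟩)))
        rw [add_moveLeft_inl, moveLeft_nim]
        exact hmX
    · intro j
      rw [add_moveLeft_inr, ihl j]
      have hh := hmX'.2 (toLeftMovesAdd (Sum.inr j))
      rwa [add_moveLeft_inr] at hh

/-- **Misère Mex Rule.** Let `G` be the impartial game whose options are precisely the
Nim-heaps `*a₁, …, *a_k`, with at least one `aᵢ` equal to `0` or `1`, and let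
`m = mex {a₁, …, a_k}`.  Then `G` equals `*m` under misère equality: for every impartial
game `X`, the games `G + X` and `*m + X` have the same misère outcome. -/
theorem misere_mex_rule (k : ℕ) (a : Fin k → ℕ) (h : ∃ i, a i = 0 ∨ a i = 1) :
    ∀ X : PGame.{0}, X.Impartial →
      (MisereP
          (PGame.mk (Fin k) (Fin k)
            (fun i => nim (a i : Ordinal)) (fun i => nim (a i : Ordinal)) + X) ↔
        MisereP (nim ((sInf {n : ℕ | n ∉ Set.range a} : ℕ) : Ordinal) + X)) := by
  intro X _
  exact misere_mex_aux k a h X
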